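/- If ≥ₓ is a well-quasi-ordering on X, then the derived multiset ordering on finite multisets over X is a well-quasi-ordering. -/

import Mathlib

attribute [local instance] Classical.propDecidable

/-- The derived multiset quasi-ordering of a relation `r`: `T ≥ U` iff `U = ∅`,
or some `t ∈ T` and `u ∈ U` are `≈`-equal (in both directions of `r`) and
`T − t ≥ U − u`, or some `t ∈ T` satisfies `T − t ≥ U` minus all elements
strictly below `t`. -/
inductive MulGE {α : Type} (r : α → α → Prop) : Multiset α → Multiset α → Prop where
  | empty (T : Multiset α) : MulGE r T 0
  | cancel {T U : Multiset α} (t u : α) (ht : t ∈ T) (hu : u ∈ U)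
      (h1 : r t u) (h2 : r u t) (h : MulGE r (T.erase t) (U.erase u)) : MulGE r T U
  | dominate {T U : Multiset α} (t : α) (ht : t ∈ T)
      (h : MulGE r (T.erase t) (U.filter (fun u => ¬ (r t u ∧ ¬ r u t)))) : MulGE r T U

private lemma le_erase_of_cons_le {α : Type} {t : α} {T₀ T : Multiset α}
    (h : t ::ₘ T₀ ≤ T) : T₀ ≤ T.erase t := by
  rw [Multiset.le_iff_count]
  intro a
  have h1 := Multiset.count_le_of_le a h
  by_cases hat : a = t
  · subst hat
    rw [Multiset.count_cons_self] at h1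
    rw [Multiset.count_erase_self]
    omega
  · rw [Multiset.count_cons_of_ne hat] at h1
    rw [Multiset.count_erase_of_ne hat]
    exact h1

private lemma rel_of_le {α : Type} (r : α → α → Prop) :
    ∀ (V U T' : Multiset α), Multiset.Rel r T' U → V ≤ U →
      ∃ T'', T'' ≤ T' ∧ Multiset.Rel r T'' V := by
  intro V
  induction V using Multiset.induction with
  | empty => exact fun U T' _ _ => ⟨0, Multiset.zero_le _, Multiset.Rel.zero⟩
  | cons v V₀ ih =>
    intro U T' hrel hle
    have hv : v ∈ U := Multiset.mem_of_le hle (Multiset.mem_cons_self _ _)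
    have hU : U = v ::ₘ U.erase v := (Multiset.cons_erase hv).symm
    rw [hU, Multiset.rel_cons_right] at hrel
    obtain ⟨t, T₀, hrt, hrel₀, rfl⟩ := hrel
    rw [hU] at hle
    have hle₀ : V₀ ≤ (v ::ₘ U.erase v).erase v := le_erase_of_cons_le hle
    rw [Multiset.erase_cons_head] at hle₀
    obtain ⟨T'', hT''le, hT''rel⟩ := ih (U.erase v) T₀ hrel₀ hle₀
    exact ⟨t ::ₘ T'', Multiset.cons_le_cons t hT''le, Multiset.Rel.cons hrt hT''rel⟩

private lemma mulGE_of_rel {α : Type} (r : α → α → Prop) :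
    ∀ (n : ℕ) (U T : Multiset α), Multiset.card U ≤ n →
      (∃ T', T' ≤ T ∧ Multiset.Rel r T' U) → MulGE r T U := by
  intro n
  induction n with
  | zero =>
    intro U T hc _
    have : U = 0 := by
      rw [← Multiset.card_eq_zero]; omega
    rw [this]; exact MulGE.empty T
  | succ n ih =>
    rintro U T hc ⟨T', hle, hrel⟩
    rcases eq_or_ne U 0 with h0 | h0
    · rw [h0]; exact MulGE.empty T
    · obtain ⟨u, hu⟩ := Multiset.exists_mem_of_ne_zero h0
      have hU : U = u ::ₘ U.erase u := (Multiset.cons_erase hu).symm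
      rw [hU, Multiset.rel_cons_right] at hrel
      obtain ⟨t, T₀, hrt, hrel₀, rfl⟩ := hrel
      have ht : t ∈ T := Multiset.mem_of_le hle (Multiset.mem_cons_self _ _)
      have hT₀ : T₀ ≤ T.erase t := le_erase_of_cons_le hle
      have hcard : Multiset.card (U.erase u) ≤ n := by
        have hcu : 0 < Multiset.card U := Multiset.card_pos.2 h0
        rw [Multiset.card_erase_of_mem hu, Nat.pred_eq_sub_one]
        omega
      by_cases hut : r u t
      · exact MulGE.cancel t u ht hu hrt hut
          (ih (U.erase u) (T.erase t) hcard ⟨T₀, hT₀, hrel₀⟩)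
      · refine MulGE.dominate t ht ?_
        set P := fun u' => ¬ (r t u' ∧ ¬ r u' t) with hP
        have hfle : U.filter P ≤ U.erase u := by
          have h1 : U.filter P = (U.erase u).filter P := by
            conv_lhs => rw [hU]
            rw [Multiset.filter_cons]
            have : ¬ P u := fun hPu => hPu ⟨hrt, hut⟩
            simp [this]
          rw [h1]
          exact Multiset.filter_le _ _
        obtain ⟨T'', hT''le, hT''rel⟩ := rel_of_le r (U.filter P) (U.erase u) T₀ hrel₀ hfle
        refine ih (U.filter P) (T.erase t) ?_ ⟨T'', le_trans hT''le hT₀, hT''rel⟩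
        calc Multiset.card (U.filter P) ≤ Multiset.card (U.erase u) :=
              Multiset.card_le_card hfle
          _ ≤ n := hcard

private lemma rel_of_forall₂ {α : Type} (r : α → α → Prop) :
    ∀ {l₁ l₂ : List α}, List.Forall₂ r l₁ l₂ → Multiset.Rel r (↑l₁) (↑l₂)
  | _, _, List.Forall₂.nil => Multiset.Rel.zero
  | _, _, List.Forall₂.cons h hs => Multiset.Rel.cons h (rel_of_forall₂ r hs)

/-- If `r` is a well-quasi-ordering on `α`, then the derived multiset ordering
is a well-quasi-ordering on finite multisets over `α`. -/
theorem stmt_8 {α : Type} (r : α → α → Prop)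
    (hrefl : ∀ x, r x x) (htrans : ∀ x y z, r x y → r y z → r x z)
    (hwqo : ∀ f : ℕ → α, ∃ i j : ℕ, i < j ∧ r (f j) (f i))
    (seq : ℕ → Multiset α) :
    ∃ i j : ℕ, i < j ∧ MulGE r (seq j) (seq i) := by
  set r' : α → α → Prop := fun a b => r b a with hr'
  haveI : Std.Refl r' := ⟨fun a => hrefl a⟩
  haveI : IsTrans α r' := ⟨fun a b c hab hbc => htrans c b a hbc hab⟩
  haveI : IsPreorder α r' := {}
  have hpwo : (Set.univ : Set α).PartiallyWellOrderedOn r' := by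
    rw [Set.partiallyWellOrderedOn_iff_exists_lt]
    intro f _
    obtain ⟨i, j, hij, hr⟩ := hwqo f
    exact ⟨i, j, hij, hr⟩
  have hH := hpwo.partiallyWellOrderedOn_sublistForall₂ r'
  obtain ⟨i, j, hij, hsl⟩ := hH.exists_lt (f := fun n => (seq n).toList) (fun n x _ => Set.mem_univ x)
  refine ⟨i, j, hij, ?_⟩
  rw [List.sublistForall₂_iff] at hsl
  obtain ⟨l, hf2, hsub⟩ := hsl
  have hrel0 : Multiset.Rel (flip r) (↑(seq i).toList) (↑l) := rel_of_forall₂ r' hf2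
  have hrel : Multiset.Rel r (↑l) (↑(seq i).toList) := Multiset.rel_flip.mp hrel0
  have hle : (↑l : Multiset α) ≤ seq j := by
    have := hsub.subperm
    rw [← Multiset.coe_toList (seq j)]
    exact this
  rw [← Multiset.coe_toList (seq i), ← Multiset.coe_toList (seq j)]
  refine mulGE_of_rel r (Multiset.card (↑(seq i).toList : Multiset α)) _ _ le_rfl ?_
  rw [Multiset.coe_toList]
  exact ⟨↑l, hle, by rw [Multiset.coe_toList] at hrel ⊢; exact hrel⟩
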